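/- In the rock-throwing causal model M with binary endogenous variables ST and BT set directly by the exogenous context, and equations SH = ST, BH = BT ∧ ¬SH, and BS = SH ∨ BH, let u⃗ be the context in which both ST=1 and BT=1. Then: (i) ST=1 is an actual cause of BS=1 in (M,u⃗), witnessed by AC2 with W⃗ = {BH} held at its actual value 0; and (ii) ST=1 is not a but-for cause of BS=1 in (M,u⃗), since (M,u⃗) ⊨ [ST←0](BS=1). -/

import Mathlib

open Classical

/-- A recursive causal model: `C` is the type of contexts (settings of the exogenous
variables), `V` the type of endogenous variables, `Val` the type of values.
`F X c g` is the structural equation for `X`, given the context `c` and the values `g`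
of the other endogenous variables.  Recursiveness (acyclicity) is captured by the
requirement that under every intervention (a partial assignment `I` of values to
endogenous variables, whose equations are replaced by the given constants) and every
context there is a unique solution of the equations. -/
structure CausalModel (C V Val : Type) where
  F : V → C → (V → Val) → Val
  unique_sol : ∀ (I : V → Option Val) (c : C),
    ∃! g : V → Val, ∀ X : V, g X = (I X).getD (F X c g)

namespace CausalModel

variable {C V Val : Type}

/-- The unique solution of the model under intervention `I` in context `c`. -/
noncomputable def sol (M : CausalModel C V Val) (I : V → Option Val) (c : C) : V → Val :=
  (M.unique_sol I c).choose

/-- The actual values of the endogenous variables in context `c` (no intervention). -/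
noncomputable def actVal (M : CausalModel C V Val) (c : C) : V → Val :=
  M.sol (fun _ => none) c

/-- The intervention `A ← x` setting the variables in `A` to the values given by `x`. -/
def interv [DecidableEq V] (A : Finset V) (x : V → Val) : V → Option Val :=
  fun X => if X ∈ A then some (x X) else none

/-- AC2 for the set `A` with the fixed alternative setting `x'`: there are a set `W` of
endogenous variables disjoint from `A` and values `w` that the variables in `W` take in
the actual setting such that `(M,c) ⊨ [A ← x', W ← w] ¬φ`. -/
def AC2At [DecidableEq V] (M : CausalModel C V Val) (c : C)
    (A : Finset V) (x' : V → Val) (φ : (V → Val) → Prop) : Prop :=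
  ∃ (W : Finset V) (w : V → Val),
    Disjoint A W ∧ (∀ Z ∈ W, M.actVal c Z = w Z) ∧
    ¬ φ (M.sol (interv (A ∪ W) (fun Z => if Z ∈ A then x' Z else w Z)) c)

/-- `A = x` is an actual cause of `φ` in `(M,c)`: AC1, AC2 and AC3 (minimality of `A`
with respect to the witnessing setting `x'`). -/
def IsActualCause [DecidableEq V] (M : CausalModel C V Val) (c : C)
    (A : Finset V) (x : V → Val) (φ : (V → Val) → Prop) : Prop :=
  (∀ X ∈ A, M.actVal c X = x X) ∧ φ (M.actVal c) ∧
  ∃ x' : V → Val, AC2At M c A x' φ ∧ ∀ B : Finset V, B ⊂ A → ¬ AC2At M c B x' φ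

/-- A but-for cause: an actual cause for which AC2 is witnessed with `W = ∅`. -/
def IsButForCause [DecidableEq V] (M : CausalModel C V Val) (c : C)
    (A : Finset V) (x : V → Val) (φ : (V → Val) → Prop) : Prop :=
  (∀ X ∈ A, M.actVal c X = x X) ∧ φ (M.actVal c) ∧
  ∃ x' : V → Val, ¬ φ (M.sol (interv A x') c) ∧
    ∀ B : Finset V, B ⊂ A → ¬ AC2At M c B x' φ

/-- SC1: `(M,c) ⊨ (A = x) ∧ φ`.  (This is also the satisfaction of `A = x ∧ φ`.) -/
def SC1 (M : CausalModel C V Val) (c : C) (A : Finset V) (x : V → Val)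
    (φ : (V → Val) → Prop) : Prop :=
  (∀ X ∈ A, M.actVal c X = x X) ∧ φ (M.actVal c)

/-- SC2: some conjunct `X = x X` of `A = x` is part of an actual cause of `φ` in `(M,c)`:
there is a (possibly empty) conjunction `Y = y` such that `X = x X ∧ Y = y` is an actual
cause of `φ` in `(M,c)`. -/
def SC2 [DecidableEq V] (M : CausalModel C V Val) (c : C) (A : Finset V)
    (x : V → Val) (φ : (V → Val) → Prop) : Prop :=
  ∃ X ∈ A, ∃ (Y : Finset V) (y : V → Val), X ∉ Y ∧
    IsActualCause M c (insert X Y) (Function.update y X (x X)) φ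

/-- SC3: `(M,c') ⊨ [A ← x] φ` for all contexts `c'`. -/
def SC3 [DecidableEq V] (M : CausalModel C V Val) (A : Finset V) (x : V → Val)
    (φ : (V → Val) → Prop) : Prop :=
  ∀ c' : C, φ (M.sol (interv A x) c')

/-- SC4: minimality; no strict subset of `A` (with `x` restricted) satisfies SC1, SC2
and SC3. -/
def SC4 [DecidableEq V] (M : CausalModel C V Val) (c : C) (A : Finset V)
    (x : V → Val) (φ : (V → Val) → Prop) : Prop :=
  ∀ B : Finset V, B ⊂ A → ¬ (SC1 M c B x φ ∧ SC2 M c B x φ ∧ SC3 M B x φ)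

/-- `A = x` is a sufficient cause of `φ` in `(M,c)`. -/
def IsSufficientCause [DecidableEq V] (M : CausalModel C V Val) (c : C)
    (A : Finset V) (x : V → Val) (φ : (V → Val) → Prop) : Prop :=
  SC1 M c A x φ ∧ SC2 M c A x φ ∧ SC3 M A x φ ∧ SC4 M c A x φ

/-- EX1 relative to a set `K` of contexts: in every context of `K` satisfying
`(A = x) ∧ φ` some conjunct of `A = x` is part of an actual cause of `φ` (SC2), and
`(M,c') ⊨ [A ← x] φ` for all `c' ∈ K`. -/
def EX1 [DecidableEq V] (M : CausalModel C V Val) (K : Set C) (A : Finset V)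
    (x : V → Val) (φ : (V → Val) → Prop) : Prop :=
  (∀ c ∈ K, SC1 M c A x φ → SC2 M c A x φ) ∧
  (∀ c ∈ K, φ (M.sol (interv A x) c))

/-- `A = x` is an explanation of `φ` relative to the set `K` of contexts: EX1,
EX2 (minimality) and EX3 (`(M,c) ⊨ (A = x) ∧ φ` for some `c ∈ K`). -/
def IsExplanation [DecidableEq V] (M : CausalModel C V Val) (K : Set C)
    (A : Finset V) (x : V → Val) (φ : (V → Val) → Prop) : Prop :=
  EX1 M K A x φ ∧
  (∀ B : Finset V, B ⊂ A → ¬ EX1 M K B x φ) ∧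
  (∃ c ∈ K, SC1 M c A x φ)

end CausalModel

open CausalModel

theorem sol_eq' {C V Val : Type} (M : CausalModel C V Val) (I : V → Option Val)
    (c : C) (g : V → Val) (h : ∀ X, g X = (I X).getD (M.F X c g)) :
    M.sol I c = g :=
  ((M.unique_sol I c).choose_spec.2 g h).symm

/-- The rock-throwing model: binary endogenous variables `ST = 0`, `BT = 1` set directly
by the exogenous context `c : Fin 2 → Bool`, and `SH = 2`, `BH = 3`, `BS = 4` with
equations `SH = ST`, `BH = BT ∧ ¬SH`, `BS = SH ∨ BH` (`true` playing the role of `1`).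
In the context where both `ST = 1` and `BT = 1`: (i) `ST = 1` is an actual cause of
`BS = 1`, witnessed by AC2 with `W = {BH}` held at its actual value `0` (indeed `BH`
actually takes value `0` and `(M,c) ⊨ [ST ← 0, BH ← 0]¬(BS = 1)`); and (ii) `ST = 1` is
not a but-for cause of `BS = 1`, since `(M,c) ⊨ [ST ← 0](BS = 1)`. -/
theorem rockThrowing_actual_cause (M : CausalModel (Fin 2 → Bool) (Fin 5) Bool)
    (hST : ∀ (c : Fin 2 → Bool) (g : Fin 5 → Bool), M.F 0 c g = c 0)
    (hBT : ∀ (c : Fin 2 → Bool) (g : Fin 5 → Bool), M.F 1 c g = c 1)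
    (hSH : ∀ (c : Fin 2 → Bool) (g : Fin 5 → Bool), M.F 2 c g = g 0)
    (hBH : ∀ (c : Fin 2 → Bool) (g : Fin 5 → Bool), M.F 3 c g = (g 1 && !(g 2)))
    (hBS : ∀ (c : Fin 2 → Bool) (g : Fin 5 → Bool), M.F 4 c g = (g 2 || g 3)) :
    (IsActualCause M (fun _ => true) {0} (fun _ => true) (fun g => g 4 = true) ∧
     M.actVal (fun _ => true) 3 = false ∧
     ¬ (M.sol (interv {0, 3} (fun _ => false)) (fun _ => true) 4 = true)) ∧
    (¬ IsButForCause M (fun _ => true) {0} (fun _ => true) (fun g => g 4 = true) ∧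
     M.sol (interv {0} (fun _ => false)) (fun _ => true) 4 = true) := by
  set c : Fin 2 → Bool := fun _ => true with hc
  have hact : M.actVal c = ![true, true, true, false, true] := by
    apply sol_eq'
    intro X
    fin_cases X <;> simp [hc, hST, hBT, hSH, hBH, hBS]
  have hsol03 : M.sol (interv {0, 3} (fun _ => false)) c
      = ![false, true, false, false, false] := by
    apply sol_eq'
    intro X
    fin_cases X <;> simp [interv, hST, hBT, hSH, hBH, hBS] <;> decide
  have hsol0 : ∀ x' : Fin 5 → Bool, M.sol (interv {0} x') c
      = ![x' 0, true, x' 0, !(x' 0), true] := by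
    intro x'
    apply sol_eq'
    intro X
    fin_cases X <;> simp [interv, hST, hBT, hSH, hBH, hBS] <;> cases x' 0 <;> decide
  -- key: A = ∅ cannot satisfy AC2
  have hempty : ∀ x' : Fin 5 → Bool,
      ¬ AC2At M c (∅ : Finset (Fin 5)) x' (fun g => g 4 = true) := by
    intro x' ⟨W, w, _, hw, hneg⟩
    apply hneg
    have : M.sol (interv ((∅ : Finset (Fin 5)) ∪ W)
        (fun Z => if Z ∈ (∅ : Finset (Fin 5)) then x' Z else w Z)) c = M.actVal c := by
      apply sol_eq'
      intro X
      by_cases hX : X ∈ W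
      · simp [interv, hX, ← hw X hX, hact]
      · have hsolve := ((M.unique_sol (fun _ => none) c).choose_spec.1) X
        simpa [interv, hX, actVal, sol] using hsolve
    rw [this, hact]
    rfl
  refine ⟨⟨⟨?_, ?_, fun _ => false, ⟨{3}, fun _ => false, ?_, ?_, ?_⟩, ?_⟩, ?_, ?_⟩,
    ?_, ?_⟩
  · intro X hX
    simp at hX
    subst hX
    rw [hact]; rfl
  · rw [hact]; rfl
  · decide
  · intro Z hZ
    simp at hZ
    subst hZ
    rw [hact]; rfl
  · show ¬ (M.sol _ c 4 = true)
    have : ({0} ∪ {3} : Finset (Fin 5)) = {0, 3} := by decide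
    rw [this]
    have : (fun Z : Fin 5 => if Z ∈ ({0} : Finset (Fin 5)) then false else false)
        = fun _ => false := by funext Z; simp
    rw [this, hsol03]
    decide
  · intro B hB
    have : B = ∅ := by
      have := Finset.eq_empty_or_nonempty B
      rcases this with h | ⟨b, hb⟩
      · exact h
      · exfalso
        have := hB.1 hb
        simp at this
        subst this
        exact hB.2 (by simp [Finset.singleton_subset_iff, hb])
    rw [this]
    exact hempty _
  · rw [hact]; rfl
  · rw [hsol03]; decide
  · rintro ⟨_, _, x', hneg, _⟩
    apply hneg
    rw [hsol0 x']
    rfl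
  · rw [hsol0 (fun _ => false)]; rfl
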